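/- Let λ > 0 and a > 2, and let p_λ be the SCAD penalty: p_λ(u) = λ|u| for |u| ≤ λ; p_λ(u) = (2aλ|u| − u² − λ²)/(2(a−1)) for λ < |u| ≤ aλ; p_λ(u) = (a+1)λ²/2 for |u| > aλ. Then the function u ↦ p_λ(u) + u²/(2(a−1)) is convex on ℝ. (Hence the SCAD penalty is weakly convex with weak-convexity parameter μ = 1/(a−1).) -/

import Mathlib

/-- The SCAD penalty with tuning parameter `λ > 0` and shape parameter `a > 2`. -/
noncomputable def scad (lam a u : ℝ) : ℝ :=
  if |u| ≤ lam then lam * |u|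
  else if |u| ≤ a * lam then (2 * a * lam * |u| - u ^ 2 - lam ^ 2) / (2 * (a - 1))
  else (a + 1) * lam ^ 2 / 2

/-- Auxiliary function: `scad lam a u + u^2/(2(a-1)) = scadAux lam a |u|`. -/
noncomputable def scadAux (lam a t : ℝ) : ℝ :=
  (2 * a * lam * t - lam ^ 2 + max (lam - t) 0 ^ 2 + max (t - a * lam) 0 ^ 2) / (2 * (a - 1))

lemma convexOn_maxSq : ConvexOn ℝ Set.univ (fun x : ℝ => max x 0 ^ 2) := by
  refine ⟨convex_univ, fun x _ y _ p q hp hq hpq => ?_⟩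
  simp only [smul_eq_mul]
  have hX : x ≤ max x 0 := le_max_left _ _
  have hY : y ≤ max y 0 := le_max_left _ _
  have hX0 : (0:ℝ) ≤ max x 0 := le_max_right _ _
  have hY0 : (0:ℝ) ≤ max y 0 := le_max_right _ _
  have h1 : max (p * x + q * y) 0 ≤ p * max x 0 + q * max y 0 := by
    apply max_le
    · nlinarith
    · nlinarith
  have h0 : (0:ℝ) ≤ max (p * x + q * y) 0 := le_max_right _ _
  nlinarith [mul_nonneg (mul_nonneg hp hq) (sq_nonneg (max x 0 - max y 0)),
    sq_nonneg (p * max x 0 + q * max y 0)]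

lemma convexOn_maxAffineSq (c d : ℝ) :
    ConvexOn ℝ Set.univ (fun t : ℝ => max (c * t + d) 0 ^ 2) := by
  refine ⟨convex_univ, fun x _ y _ p q hp hq hpq => ?_⟩
  simp only [smul_eq_mul]
  have harg : c * (p * x + q * y) + d = p * (c * x + d) + q * (c * y + d) := by
    linear_combination d * hpq.symm
  have := convexOn_maxSq.2 (Set.mem_univ (c * x + d)) (Set.mem_univ (c * y + d)) hp hq hpq
  simp only [smul_eq_mul] at this
  rw [harg]
  exact this

lemma scadAux_convexOn (lam a : ℝ) (hlam : 0 < lam) (ha : 2 < a) :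
    ConvexOn ℝ Set.univ (scadAux lam a) := by
  have ha1 : (0:ℝ) < a - 1 := by linarith
  have hc : (0:ℝ) ≤ (2 * (a - 1))⁻¹ := by positivity
  have haff : ConvexOn ℝ Set.univ (fun t : ℝ => 2 * a * lam * t - lam ^ 2) := by
    refine ⟨convex_univ, fun x _ y _ p q hp hq hpq => ?_⟩
    simp only [smul_eq_mul]
    exact le_of_eq (by linear_combination lam ^ 2 * hpq)
  have h1 : ConvexOn ℝ Set.univ (fun t : ℝ => max (lam - t) 0 ^ 2) := by
    have := convexOn_maxAffineSq (-1) lam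
    convert this using 2 with t
    ring_nf
  have h2 : ConvexOn ℝ Set.univ (fun t : ℝ => max (t - a * lam) 0 ^ 2) := by
    have := convexOn_maxAffineSq 1 (-(a * lam))
    convert this using 2 with t
    ring_nf
  have hsum := (haff.add h1).add h2
  have heq : scadAux lam a = fun t : ℝ => (2 * (a - 1))⁻¹ •
      (2 * a * lam * t - lam ^ 2 + max (lam - t) 0 ^ 2 + max (t - a * lam) 0 ^ 2) := by
    funext t
    simp [scadAux, smul_eq_mul, div_eq_inv_mul]
  rw [heq]
  exact hsum.smul hc

lemma scadAux_monotoneOn (lam a : ℝ) (hlam : 0 < lam) (ha : 2 < a) :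
    MonotoneOn (scadAux lam a) (Set.Ici 0) := by
  intro s hs t ht hst
  simp only [Set.mem_Ici] at hs ht
  unfold scadAux
  have hD : (0:ℝ) < 2 * (a - 1) := by linarith
  rw [div_le_div_iff_of_pos_right hD]
  have hX : max (lam - s) 0 ≤ lam := max_le (by linarith) hlam.le
  have hY0 : (0:ℝ) ≤ max (lam - t) 0 := le_max_right _ _
  have hYX : max (lam - t) 0 ≤ max (lam - s) 0 := max_le_max (by linarith) le_rfl
  have hd : max (lam - s) 0 - max (lam - t) 0 ≤ t - s := by
    rcases le_total (lam - s) 0 with h | h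
    · rw [max_eq_right h]
      have : max (lam - t) 0 = 0 := le_antisymm (by rw [max_eq_right h] at hYX; exact hYX) hY0
      rw [this]; linarith
    · rw [max_eq_left h]
      rcases le_total (lam - t) 0 with h2 | h2
      · rw [max_eq_right h2]; linarith
      · rw [max_eq_left h2]; linarith
  have hU0 : (0:ℝ) ≤ max (s - a * lam) 0 := le_max_right _ _
  have hUV : max (s - a * lam) 0 ≤ max (t - a * lam) 0 := max_le_max (by linarith) le_rfl
  nlinarith [mul_nonneg (sub_nonneg.2 hUV) (by linarith : (0:ℝ) ≤ max (t - a * lam) 0 + max (s - a * lam) 0),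
    mul_nonneg (by linarith : (0:ℝ) ≤ t - s - (max (lam - s) 0 - max (lam - t) 0))
      (by linarith : (0:ℝ) ≤ max (lam - s) 0 + max (lam - t) 0),
    mul_nonneg (by linarith : (0:ℝ) ≤ t - s)
      (by nlinarith [mul_pos hlam (show (0:ℝ) < a - 1 by linarith)] :
        (0:ℝ) ≤ 2 * a * lam - (max (lam - s) 0 + max (lam - t) 0))]

lemma scad_eq_scadAux (lam a u : ℝ) (hlam : 0 < lam) (ha : 2 < a) :
    scad lam a u + u ^ 2 / (2 * (a - 1)) = scadAux lam a |u| := by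
  have ha1 : (0:ℝ) < a - 1 := by linarith
  have hD : (2 * (a - 1) : ℝ) ≠ 0 := by positivity
  have hu2 : |u| ^ 2 = u ^ 2 := sq_abs u
  unfold scad scadAux
  rw [← hu2]
  split_ifs with h1 h2
  · have e1 : max (lam - |u|) 0 = lam - |u| := max_eq_left (by linarith)
    have e2 : max (|u| - a * lam) 0 = 0 := max_eq_right (by nlinarith)
    rw [e1, e2]
    field_simp
    linear_combination
  · have e1 : max (lam - |u|) 0 = 0 := max_eq_right (by linarith)
    have e2 : max (|u| - a * lam) 0 = 0 := max_eq_right (by linarith)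
    rw [e1, e2]
    field_simp
    ring
  · have e1 : max (lam - |u|) 0 = 0 := max_eq_right (by linarith)
    have e2 : max (|u| - a * lam) 0 = |u| - a * lam := max_eq_left (by linarith)
    rw [e1, e2]
    field_simp
    linear_combination

/-- The SCAD penalty is weakly convex with parameter `μ = 1/(a−1)`:
`u ↦ p_λ(u) + u²/(2(a−1))` is convex on `ℝ`. -/
theorem scad_weakly_convex (lam a : ℝ) (hlam : 0 < lam) (ha : 2 < a) :
    ConvexOn ℝ Set.univ (fun u : ℝ => scad lam a u + u ^ 2 / (2 * (a - 1))) := by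
  have habs : ConvexOn ℝ Set.univ (fun u : ℝ => |u|) := by
    exact convexOn_univ_norm (E := ℝ)
  have himg : (fun u : ℝ => |u|) '' Set.univ = Set.Ici 0 := by
    ext x
    constructor
    · rintro ⟨y, -, rfl⟩
      exact abs_nonneg y
    · intro hx
      exact ⟨x, Set.mem_univ x, abs_of_nonneg hx⟩
  have hg : ConvexOn ℝ ((fun u : ℝ => |u|) '' Set.univ) (scadAux lam a) := by
    rw [himg]
    exact (scadAux_convexOn lam a hlam ha).subset (Set.subset_univ _) (convex_Ici 0)
  have hm : MonotoneOn (scadAux lam a) ((fun u : ℝ => |u|) '' Set.univ) := by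
    rw [himg]
    exact scadAux_monotoneOn lam a hlam ha
  have key : (fun u : ℝ => scad lam a u + u ^ 2 / (2 * (a - 1)))
      = scadAux lam a ∘ (fun u : ℝ => |u|) :=
    funext fun u => scad_eq_scadAux lam a u hlam ha
  rw [key]
  exact hg.comp habs hm
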